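/- Let z₁, …, z_n ∈ 𝔻 (n ≥ 1) satisfy |z_k| ≤ ((1 − |z_n|)/(4(n−1))) · (1 − d(z_k, z_n)) for k = 1, …, n−1, where d is the pseudo-hyperbolic distance. Then the function f(ζ) = ζ^{1−n} ∏_{k=1}^{n} (ζ − z_k)/(1 − conj(z_k) ζ) restricted to 𝕋 is a sense-preserving circle homeomorphism. -/

import Mathlib

open Complex MeasureTheory ComplexConjugate

/-- A sense-preserving homeomorphism of the unit circle, described via a continuous
strictly increasing degree-one lift. -/
def CirclePosHomeo (f : ℂ → ℂ) : Prop :=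
  ∃ F : ℝ → ℝ, Continuous F ∧ StrictMono F ∧
    (∀ θ, F (θ + 2 * Real.pi) = F θ + 2 * Real.pi) ∧
    ∀ θ : ℝ, f (Complex.exp (θ * Complex.I)) = Complex.exp (F θ * Complex.I)

/-- The pseudo-hyperbolic distance on the unit disk. -/
noncomputable def pseudoDist (z w : ℂ) : ℝ := ‖(z - w) / (1 - z * conj w)‖

lemma rep_arctan (w : ℂ) (hw : 0 < w.re) :
    w = (‖w‖ : ℂ) * Complex.exp ((Real.arctan (w.im / w.re) : ℂ) * I) := by
  set t := w.im / w.re with ht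
  have hst : Real.sqrt (1 + t ^ 2) * w.re = ‖w‖ := by
    have h1 : (1 + t ^ 2) * w.re ^ 2 = w.re ^ 2 + w.im ^ 2 := by
      rw [ht, add_mul, div_pow, one_mul, div_mul_cancel₀ _ (pow_ne_zero 2 hw.ne')]
    have : ‖w‖ = Real.sqrt (w.re ^ 2 + w.im ^ 2) := by
      rw [Complex.norm_def, Complex.normSq_apply]; ring_nf
    rw [this, ← h1, Real.sqrt_mul (by positivity), Real.sqrt_sq hw.le]
  have hs : Real.sqrt (1 + t ^ 2) ≠ 0 := by positivity
  have hre : w.re ≠ 0 := hw.ne'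
  apply Complex.ext
  · simp only [Complex.mul_re, Complex.ofReal_re, Complex.ofReal_im]
    rw [show ((Real.arctan t : ℂ)) * I = ((Real.arctan t : ℝ) : ℂ) * I from rfl]
    rw [Complex.exp_ofReal_mul_I_re, Complex.exp_ofReal_mul_I_im, Real.cos_arctan, ← hst]
    field_simp
    simp
  · simp only [Complex.mul_im, Complex.ofReal_re, Complex.ofReal_im]
    rw [show ((Real.arctan t : ℂ)) * I = ((Real.arctan t : ℝ) : ℂ) * I from rfl]
    rw [Complex.exp_ofReal_mul_I_re, Complex.exp_ofReal_mul_I_im, Real.sin_arctan, ← hst]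
    field_simp [ht]
    rw [zero_mul, add_zero, ht, div_mul_cancel₀ _ hre]

lemma factor_eq {z : ℂ} (hz : ‖z‖ < 1) (θ : ℝ) :
    (Complex.exp (θ * I) - z) / (1 - conj z * Complex.exp (θ * I)) =
      Complex.exp (θ * I) *
        Complex.exp (((-2 * Real.arctan ((1 - conj z * Complex.exp (θ * I)).im /
          (1 - conj z * Complex.exp (θ * I)).re) : ℝ) : ℂ) * I) := by
  set e := Complex.exp (θ * I) with he
  set w := 1 - conj z * e with hwdef
  have hnorm_e : ‖e‖ = 1 := by
    rw [he, Complex.norm_exp_ofReal_mul_I]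
  have hre : 0 < w.re := by
    have h1 : ‖conj z * e‖ < 1 := by
      rw [norm_mul, hnorm_e, mul_one, RCLike.norm_conj]; exact hz
    have h2 : |(conj z * e).re| ≤ ‖conj z * e‖ := Complex.abs_re_le_norm _
    have : (conj z * e).re < 1 := lt_of_le_of_lt (le_trans (le_abs_self _) h2) h1
    simp only [hwdef, Complex.sub_re, Complex.one_re]
    linarith
  set g := Real.arctan (w.im / w.re) with hg
  have hrep : w = (‖w‖ : ℂ) * Complex.exp ((g : ℂ) * I) := rep_arctan w hre
  have hwne : w ≠ 0 := by
    intro h; rw [h] at hre; simp at hre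
  have hnum : e - z = e * conj w := by
    have hme : e * conj e = 1 := by
      rw [Complex.mul_conj]
      norm_cast
      rw [← Complex.sq_norm, hnorm_e]; norm_num
    calc e - z = e - z * (e * conj e) := by rw [hme]; ring
      _ = e * conj w := by rw [hwdef]; simp [map_sub, map_mul]; ring
  have hconjw : conj w = (‖w‖ : ℂ) * Complex.exp (-(g : ℂ) * I) := by
    conv_lhs => rw [hrep]
    rw [map_mul, Complex.conj_ofReal, ← Complex.exp_conj]
    congr 1
    simp
  have hkey : Complex.exp (((-2 * g : ℝ) : ℂ) * I) * w
      = (‖w‖ : ℂ) * Complex.exp (-(g : ℂ) * I) := by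
    conv_lhs => rw [hrep]
    rw [show Complex.exp (((-2*g:ℝ):ℂ)*I) * ((‖w‖:ℂ) * Complex.exp ((g:ℂ)*I))
        = (‖w‖:ℂ) * (Complex.exp (((-2*g:ℝ):ℂ)*I) * Complex.exp ((g:ℂ)*I)) from by ring,
      ← Complex.exp_add,
      show ((-2*g:ℝ):ℂ)*I + (g:ℂ)*I = -(g:ℂ)*I from by push_cast; ring]
  rw [div_eq_iff hwne, hnum, hconjw, mul_assoc, hkey]

lemma factor_deriv {z : ℂ} (hz : ‖z‖ < 1) (θ : ℝ) :
    ∃ d : ℝ, HasDerivAt (fun t : ℝ => Real.arctan ((1 - conj z * Complex.exp (t * I)).im /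
        (1 - conj z * Complex.exp (t * I)).re)) d θ ∧
      2 * d ≤ 1 - (1 - ‖z‖) / (1 + ‖z‖) := by
  have hnorm_e : ∀ t : ℝ, ‖Complex.exp ((t:ℂ) * I)‖ = 1 := fun t => by
    rw [Complex.norm_exp_ofReal_mul_I]
  have hupos : ∀ t : ℝ, 0 < (1 - conj z * Complex.exp ((t:ℂ) * I)).re := by
    intro t
    have h1 : ‖conj z * Complex.exp ((t:ℂ)*I)‖ < 1 := by
      rw [norm_mul, hnorm_e, mul_one, RCLike.norm_conj]; exact hz
    have h2 := Complex.abs_re_le_norm (conj z * Complex.exp ((t:ℂ)*I))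
    have : (conj z * Complex.exp ((t:ℂ)*I)).re < 1 :=
      lt_of_le_of_lt (le_trans (le_abs_self _) h2) h1
    simp only [Complex.sub_re, Complex.one_re]
    linarith
  -- derivative of w
  have hwd : HasDerivAt (fun t : ℝ => 1 - conj z * Complex.exp ((t:ℂ) * I))
      (-(conj z * (Complex.exp ((θ:ℂ) * I) * (1 * I)))) θ := by
    have h1 : HasDerivAt (fun t : ℝ => ((t:ℂ))) 1 θ := Complex.ofRealCLM.hasDerivAt
    have h2 := (h1.mul_const I).cexp
    exact (h2.const_mul (conj z)).const_sub 1
  have hud : HasDerivAt (fun t : ℝ => (1 - conj z * Complex.exp ((t:ℂ) * I)).re)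
      ((-(conj z * (Complex.exp ((θ:ℂ) * I) * (1 * I)))).re) θ :=
    Complex.reCLM.hasFDerivAt.comp_hasDerivAt θ hwd
  have hvd : HasDerivAt (fun t : ℝ => (1 - conj z * Complex.exp ((t:ℂ) * I)).im)
      ((-(conj z * (Complex.exp ((θ:ℂ) * I) * (1 * I)))).im) θ :=
    Complex.imCLM.hasFDerivAt.comp_hasDerivAt θ hwd
  set u := (1 - conj z * Complex.exp ((θ:ℂ) * I)).re with hu
  set v := (1 - conj z * Complex.exp ((θ:ℂ) * I)).im with hv
  set u' := (-(conj z * (Complex.exp ((θ:ℂ) * I) * (1 * I)))).re with hu'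
  set v' := (-(conj z * (Complex.exp ((θ:ℂ) * I) * (1 * I)))).im with hv'
  have hune : u ≠ 0 := (hupos θ).ne'
  have hq : HasDerivAt (fun t : ℝ => (1 - conj z * Complex.exp ((t:ℂ) * I)).im /
      (1 - conj z * Complex.exp ((t:ℂ) * I)).re) ((v' * u - v * u') / u ^ 2) θ :=
    hvd.div hud hune
  have harc := (Real.hasDerivAt_arctan (v / u)).comp θ hq
  refine ⟨_, harc, ?_⟩
  set X := (conj z * Complex.exp ((θ:ℂ) * I)).re with hX
  set Y := (conj z * Complex.exp ((θ:ℂ) * I)).im with hY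
  set r := ‖z‖ with hr
  have hu2 : u = 1 - X := by
    rw [hu, hX]; simp only [Complex.sub_re, Complex.one_re]
  have hv2 : v = -Y := by
    rw [hv, hY]; simp only [Complex.sub_im, Complex.one_im]; ring
  have hu'2 : u' = Y := by
    rw [hu', hY]
    simp only [one_mul, Complex.neg_re, Complex.mul_re, Complex.mul_im,
      Complex.I_re, Complex.I_im]
    ring
  have hv'2 : v' = -X := by
    rw [hv', hX]
    simp only [one_mul, Complex.neg_im, Complex.mul_re, Complex.mul_im,
      Complex.I_re, Complex.I_im]
    ring
  have hXY : X ^ 2 + Y ^ 2 = r ^ 2 := by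
    have h1 := Complex.sq_norm (conj z * Complex.exp ((θ:ℂ) * I))
    rw [Complex.normSq_apply] at h1
    have h2 : ‖conj z * Complex.exp ((θ:ℂ) * I)‖ = r := by
      rw [norm_mul, hnorm_e, mul_one, RCLike.norm_conj]
    rw [h2] at h1
    rw [← hX, ← hY] at h1
    nlinarith [h1]
  have hr0 : (0:ℝ) ≤ r := norm_nonneg z
  have hr1 : r < 1 := hz
  have hXle : X ≤ r := by nlinarith [sq_nonneg Y, sq_nonneg (X - r), sq_nonneg (X + r)]
  have hXge : -r ≤ X := by nlinarith [sq_nonneg Y, sq_nonneg (X - r), sq_nonneg (X + r)]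
  have hD : 0 < u ^ 2 + v ^ 2 := by nlinarith [hupos θ, sq_nonneg v]
  have hd : 1 / (1 + (v / u) ^ 2) * ((v' * u - v * u') / u ^ 2)
      = (v' * u - v * u') / (u ^ 2 + v ^ 2) := by
    field_simp
  rw [hd, hu'2, hv'2, hu2, hv2,
    show 1 - (1 - r) / (1 + r) = 2 * r / (1 + r) from by field_simp; ring,
    show (2:ℝ) * ((-X * (1 - X) - -Y * Y) / ((1 - X) ^ 2 + (-Y) ^ 2))
      = (2 * (X ^ 2 + Y ^ 2 - X)) / ((1 - X) ^ 2 + (-Y) ^ 2) from by ring]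
  rw [div_le_div_iff₀ (by rw [← hu2, ← hv2] at *; nlinarith [hD]) (by linarith : (0:ℝ) < 1 + r)]
  nlinarith [mul_nonneg (sub_nonneg.2 hr1.le) (by linarith : (0:ℝ) ≤ r + X), hXY]

/-- if `|z_k| ≤ ((1 − |z_n|)/(4(n−1)))(1 − d(z_k, z_n))` for
`k = 1,…,n−1`, then `ζ ↦ ζ^{1−n} ∏ (ζ − z_k)/(1 − conj(z_k) ζ)` is a circle
homeomorphism. -/
theorem blaschke_over_monomial_circle_homeo
    (n : ℕ) (hn : 1 ≤ n) (z : Fin n → ℂ) (hz : ∀ k, ‖z k‖ < 1)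
    (hcond : ∀ k : Fin n, (k : ℕ) + 1 < n →
      ‖z k‖ ≤ (1 - ‖z ⟨n - 1, by omega⟩‖) / (4 * ((n : ℝ) - 1)) *
        (1 - pseudoDist (z k) (z ⟨n - 1, by omega⟩)))
    (f : ℂ → ℂ)
    (hf : ∀ ζ : ℂ, f ζ = ζ ^ ((1 : ℤ) - (n : ℤ)) * ∏ k, (ζ - z k) / (1 - conj (z k) * ζ)) :
    CirclePosHomeo f := by
  classical
  set m : Fin n := ⟨n - 1, by omega⟩ with hm
  set r := ‖z m‖ with hrdef
  have hr1 : r < 1 := hz m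
  have hr0 : (0:ℝ) ≤ r := norm_nonneg _
  set g : Fin n → ℝ → ℝ := fun k t =>
    Real.arctan ((1 - conj (z k) * Complex.exp ((t:ℂ) * I)).im /
      (1 - conj (z k) * Complex.exp ((t:ℂ) * I)).re) with hgdef
  set F : ℝ → ℝ := fun t => t - 2 * ∑ k, g k t with hFdef
  have hder : ∀ θ : ℝ, ∃ D : ℝ, HasDerivAt F D θ ∧ 0 < D := by
    intro θ
    choose d hd hb using fun k : Fin n => factor_deriv (hz k) θ
    refine ⟨1 - 2 * ∑ k, d k, ?_, ?_⟩
    · have h1 : HasDerivAt (fun t => ∑ k, g k t) (∑ k, d k) θ :=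
        HasDerivAt.fun_sum fun k _ => hd k
      simpa [hFdef] using (hasDerivAt_id θ).fun_sub (h1.const_mul (2:ℝ))
    · have hsum : ∑ k ∈ Finset.univ.erase m, (2 * d k) ≤ (1 - r) / 2 := by
        by_cases hn1 : n = 1
        · have hempty : Finset.univ.erase m = (∅ : Finset (Fin n)) := by
            apply Finset.eq_empty_of_forall_notMem
            intro k hk
            exact (Finset.ne_of_mem_erase hk) (by subst hn1; exact Subsingleton.elim k m)
          rw [hempty, Finset.sum_empty]
          linarith
        · have hn2 : 2 ≤ n := by omega
          have hnR : (0:ℝ) < (n:ℝ) - 1 := by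
            have : (2:ℝ) ≤ (n:ℝ) := by exact_mod_cast hn2
            linarith
          have hk : ∀ k ∈ Finset.univ.erase m, 2 * d k ≤ (1 - r) / (2 * ((n:ℝ) - 1)) := by
            intro k hkmem
            have hkm : k ≠ m := Finset.ne_of_mem_erase hkmem
            have hklt : (k : ℕ) + 1 < n := by
              have h1 := k.isLt
              have h2 : (k:ℕ) ≠ n - 1 := by
                intro h
                exact hkm (Fin.ext (by simp [hm, h]))
              omega
            have hzm : z ⟨n - 1, by omega⟩ = z m := rfl
            have hc := hcond k hklt
            rw [hzm] at hc
            set t := ‖z k‖ with ht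
            have ht0 : (0:ℝ) ≤ t := norm_nonneg _
            have ht1 : t < 1 := hz k
            have hpd : 0 ≤ pseudoDist (z k) (z m) := norm_nonneg _
            have hcoef : (0:ℝ) ≤ (1 - r) / (4 * ((n:ℝ) - 1)) :=
              div_nonneg (by linarith) (by linarith)
            have ht2 : t ≤ (1 - r) / (4 * ((n:ℝ) - 1)) := by
              calc t ≤ (1 - r) / (4 * ((n:ℝ) - 1)) * (1 - pseudoDist (z k) (z m)) := hc
                _ ≤ (1 - r) / (4 * ((n:ℝ) - 1)) * 1 := by
                    apply mul_le_mul_of_nonneg_left _ hcoef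
                    linarith
                _ = (1 - r) / (4 * ((n:ℝ) - 1)) := mul_one _
            have hstep : 1 - (1 - t) / (1 + t) ≤ 2 * t := by
              have hpos : (0:ℝ) < 1 + t := by linarith
              have h : 1 - 2 * t ≤ (1 - t) / (1 + t) := by
                rw [le_div_iff₀ hpos]; nlinarith
              linarith
            have := hb k
            have h2t : 2 * t ≤ (1 - r) / (2 * ((n:ℝ) - 1)) := by
              rw [le_div_iff₀ (by linarith : (0:ℝ) < 2 * ((n:ℝ) - 1))]
              rw [le_div_iff₀ (by linarith : (0:ℝ) < 4 * ((n:ℝ) - 1))] at ht2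
              nlinarith
            linarith
          calc ∑ k ∈ Finset.univ.erase m, (2 * d k)
              ≤ (Finset.univ.erase m).card • ((1 - r) / (2 * ((n:ℝ) - 1))) :=
                Finset.sum_le_card_nsmul _ _ _ hk
            _ = ((n - 1 : ℕ) : ℝ) * ((1 - r) / (2 * ((n:ℝ) - 1))) := by
                rw [Finset.card_erase_of_mem (Finset.mem_univ m), Finset.card_univ,
                  Fintype.card_fin, nsmul_eq_mul]
            _ = ((n:ℝ) - 1) * ((1 - r) / (2 * ((n:ℝ) - 1))) := by
                congr 1
                push_cast [hn]
                ring
            _ = (1 - r) / 2 := by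
                field_simp
      have hbm : 2 * d m ≤ 1 - (1 - r) / (1 + r) := hb m
      have hsplit : 2 * ∑ k, d k = 2 * d m + ∑ k ∈ Finset.univ.erase m, (2 * d k) := by
        rw [Finset.mul_sum, ← Finset.add_sum_erase _ _ (Finset.mem_univ m)]
      have hkey : (1 - r) / 2 < (1 - r) / (1 + r) := by
        apply div_lt_div_of_pos_left (by linarith) (by linarith) (by linarith)
      linarith
  choose D hD hDpos using hder
  refine ⟨F, ?_, ?_, ?_, ?_⟩
  · exact continuous_iff_continuousAt.2 fun θ => (hD θ).continuousAt
  · exact strictMono_of_hasDerivAt_pos hD hDpos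
  · intro θ
    have he : ∀ k : Fin n, g k (θ + 2 * Real.pi) = g k θ := by
      intro k
      have : Complex.exp ((↑(θ + 2 * Real.pi) : ℂ) * I) = Complex.exp ((θ:ℂ) * I) := by
        push_cast
        rw [add_mul, Complex.exp_add, Complex.exp_two_pi_mul_I, mul_one]
      simp only [hgdef, this]
    simp only [hFdef, Finset.sum_congr rfl fun k _ => he k]
    ring
  · intro θ
    rw [hf]
    set e := Complex.exp ((θ:ℂ) * I) with he
    have hene : e ≠ 0 := Complex.exp_ne_zero _
    have hprod : ∏ k, (e - z k) / (1 - conj (z k) * e)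
        = e ^ n * Complex.exp ((↑(-2 * ∑ k, g k θ) : ℂ) * I) := by
      calc ∏ k, (e - z k) / (1 - conj (z k) * e)
          = ∏ k, (e * Complex.exp ((↑(-2 * g k θ) : ℂ) * I)) :=
            Finset.prod_congr rfl fun k _ => factor_eq (hz k) θ
        _ = e ^ n * ∏ k, Complex.exp ((↑(-2 * g k θ) : ℂ) * I) := by
            rw [Finset.prod_mul_distrib, Finset.prod_const, Finset.card_univ, Fintype.card_fin]
        _ = e ^ n * Complex.exp (∑ k, (↑(-2 * g k θ) : ℂ) * I) := by
            rw [Complex.exp_sum]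
        _ = e ^ n * Complex.exp ((↑(-2 * ∑ k, g k θ) : ℂ) * I) := by
            congr 1
            rw [← Finset.sum_mul]
            congr 1
            push_cast
            rw [Finset.mul_sum]
    rw [hprod]
    have hzp : e ^ ((1:ℤ) - (n:ℤ)) * e ^ n = e := by
      rw [← zpow_natCast e n, ← zpow_add₀ hene]
      norm_num
    have hFθ : ((F θ : ℝ) : ℂ) * I = (θ:ℂ) * I + (↑(-2 * ∑ k, g k θ) : ℂ) * I := by
      simp only [hFdef]
      push_cast
      ring
    rw [← mul_assoc, hzp, hFθ, Complex.exp_add, ← he]
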